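/- Let n ≥ 3 and b, c, x, y ∈ ℂ with b ≠ 0, c ≠ 0, bc ≠ 1, and x² ≠ cy²/b. For 1 ≤ i ≤ n−1 let A_i = L_i([[0, b],[c, 0]]) and B_i = L_i([[x, y],[cy/b, x]]) be n×n complex matrices. Then the only subspaces V of ℂⁿ with A_i V ⊆ V and B_i V ⊆ V for all 1 ≤ i ≤ n−1 are V = 0 and V = ℂⁿ; i.e., the family {A_i, B_i : 1 ≤ i ≤ n−1} is irreducible. -/

import Mathlib

open Matrix

/-- `localBlock n k M` is the `n × n` matrix agreeing with the identity matrix except that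
its `2 × 2` block in (0-based) rows and columns `k, k + 1` equals `M`.  For `1 ≤ i ≤ n - 1`
(1-based indexing), the matrix `L_i(M)` of the paper is `localBlock n (i - 1) M`. -/
def localBlock (n k : ℕ) (M : Matrix (Fin 2) (Fin 2) ℂ) : Matrix (Fin n) (Fin n) ℂ :=
  fun j l =>
    if j.val = k ∧ l.val = k then M 0 0
    else if j.val = k ∧ l.val = k + 1 then M 0 1
    else if j.val = k + 1 ∧ l.val = k then M 1 0
    else if j.val = k + 1 ∧ l.val = k + 1 then M 1 1
    else if j = l then 1 else 0

lemma localBlock_mulVec (n k : ℕ) (hk : k + 1 < n) (M : Matrix (Fin 2) (Fin 2) ℂ)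
    (u : Fin n → ℂ) (j : Fin n) :
    (localBlock n k M).mulVec u j =
      if j.val = k then M 0 0 * u ⟨k, by omega⟩ + M 0 1 * u ⟨k+1, hk⟩
      else if j.val = k + 1 then M 1 0 * u ⟨k, by omega⟩ + M 1 1 * u ⟨k+1, hk⟩
      else u j := by
  set k0 : Fin n := ⟨k, by omega⟩
  set k1 : Fin n := ⟨k+1, hk⟩
  have hne : k0 ≠ k1 := by simp [k0, k1, Fin.ext_iff]
  have key : ∀ f : Fin n → ℂ, (∀ l, l ≠ k0 → l ≠ k1 → f l = 0) →
      ∑ l, f l = f k0 + f k1 := by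
    intro f hf
    rw [← Finset.sum_pair hne]
    refine (Finset.sum_subset (Finset.subset_univ _) ?_).symm
    intro l _ hl
    simp only [Finset.mem_insert, Finset.mem_singleton, not_or] at hl
    exact hf l hl.1 hl.2
  unfold mulVec dotProduct localBlock
  rcases eq_or_ne j.val k with h0 | h0
  · rw [key]
    · simp [k0, k1, h0, Fin.ext_iff]
    · intro l hl0 hl1
      have : l.val ≠ k := fun h => hl0 (Fin.ext h)
      have : l.val ≠ k + 1 := fun h => hl1 (Fin.ext h)
      have hjl : j ≠ l := by
        intro h; subst h; omega
      simp_all [Fin.ext_iff]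
  · rcases eq_or_ne j.val (k+1) with h1 | h1
    · rw [key]
      · simp [k0, k1, h0, h1, Fin.ext_iff]
      · intro l hl0 hl1
        have h2 : l.val ≠ k := fun h => hl0 (Fin.ext h)
        have h3 : l.val ≠ k + 1 := fun h => hl1 (Fin.ext h)
        have hjl : j ≠ l := by intro h; subst h; omega
        simp_all [Fin.ext_iff]
    · have : ∀ l : Fin n, (if j.val = k ∧ l.val = k then M 0 0
        else if j.val = k ∧ l.val = k + 1 then M 0 1
        else if j.val = k + 1 ∧ l.val = k then M 1 0
        else if j.val = k + 1 ∧ l.val = k + 1 then M 1 1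
        else if j = l then (1:ℂ) else 0) * u l = (if j = l then (1:ℂ) else 0) * u l := by
        intro l; simp [h0, h1]
      simp only [this]
      simp [h0, h1]

lemma mulVec_A (n k : ℕ) (hk : k + 1 < n) (b c : ℂ) (u : Fin n → ℂ) (j : Fin n) :
    (localBlock n k !![0, b; c, 0]).mulVec u j =
      if j.val = k then b * u ⟨k+1, hk⟩
      else if j.val = k + 1 then c * u ⟨k, by omega⟩
      else u j := by
  rw [localBlock_mulVec n k hk]
  rcases eq_or_ne j.val k with h0 | h0 <;> rcases eq_or_ne j.val (k+1) with h1 | h1 <;>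
    simp [h0, h1]

/-- Theorem 5.6, first part: the homogeneous local representation `ρ₃` of `SBₙ`
is irreducible when `bc ≠ 1`. -/
theorem rho3_local_irreducible_of_bc_ne_one (n : ℕ) (hn : 3 ≤ n) (b c x y : ℂ)
    (hb : b ≠ 0) (hc : c ≠ 0) (hbc : b * c ≠ 1) (hxy : x ^ 2 ≠ c * y ^ 2 / b)
    (A B : ℕ → Matrix (Fin n) (Fin n) ℂ)
    (hA : ∀ i, A i = localBlock n (i - 1) !![0, b; c, 0])
    (hB : ∀ i, B i = localBlock n (i - 1) !![x, y; c * y / b, x]) :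
    ∀ V : Submodule ℂ (Fin n → ℂ),
      (∀ i : ℕ, 1 ≤ i → i ≤ n - 1 → ∀ u ∈ V, (A i).mulVec u ∈ V ∧ (B i).mulVec u ∈ V) →
      V = ⊥ ∨ V = ⊤ := by
  intro V hV
  by_cases hbot : V = ⊥
  · exact Or.inl hbot
  right
  have hAk : ∀ k : ℕ, k + 1 < n → ∀ u ∈ V,
      (localBlock n k !![0, b; c, 0]).mulVec u ∈ V := by
    intro k hk u hu
    have h := (hV (k+1) (by omega) (by omega) u hu).1
    rwa [hA, Nat.add_sub_cancel] at h
  have hbc1 : b * c - 1 ≠ 0 := sub_ne_zero.mpr hbc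
  -- projections onto pairs of adjacent coordinates preserve V
  have hproj : ∀ k : ℕ, (hk : k + 1 < n) → ∀ u ∈ V,
      (fun j : Fin n => if j.val = k ∨ j.val = k + 1 then u j else 0) ∈ V := by
    intro k hk u hu
    have hmem : (b * c - 1)⁻¹ •
        ((localBlock n k !![0, b; c, 0]).mulVec
          ((localBlock n k !![0, b; c, 0]).mulVec u) - u) ∈ V :=
      V.smul_mem _ (V.sub_mem (hAk k hk _ (hAk k hk u hu)) hu)
    convert hmem using 1
    funext j
    simp only [Pi.smul_apply, Pi.sub_apply, smul_eq_mul, mulVec_A n k hk]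
    rcases eq_or_ne j.val k with h0 | h0
    · have huj : u j = u ⟨k, by omega⟩ := congrArg u (Fin.ext h0)
      simp only [h0, if_pos rfl, eq_self_iff_true, true_or, if_true,
        show ¬((k:ℕ)+1 = k) from by omega, if_false, huj]
      field_simp
    · rcases eq_or_ne j.val (k+1) with h1 | h1
      · have huj : u j = u ⟨k+1, hk⟩ := congrArg u (Fin.ext h1)
        simp only [h0, h1, if_pos rfl, if_false, or_true, if_true,
          show ¬((k:ℕ)+1 = k) from by omega, huj]
        field_simp
      · simp only [h0, h1, if_false, or_self]
        field_simp
        ring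
  -- isolating a single interior coordinate
  have hsingle : ∀ j : ℕ, 1 ≤ j → j + 2 ≤ n → ∀ u ∈ V,
      (fun l : Fin n => if l.val = j then u l else 0) ∈ V := by
    intro j hj1 hj2 u hu
    have h1 := hproj (j-1) (by omega) u hu
    rw [show j - 1 + 1 = j from by omega] at h1
    have h2 := hproj j (by omega) _ h1
    convert h2 using 1
    funext l
    by_cases h : l.val = j
    · rw [if_pos h, if_pos (Or.inl h), if_pos (Or.inr h)]
    · rcases eq_or_ne l.val (j+1) with h1 | h1
      · have e1 : ¬(l.val = j - 1 ∨ l.val = j) := by omega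
        rw [if_neg h, if_pos (Or.inr h1), if_neg e1]
      · rw [if_neg h, if_neg (by tauto)]
  -- from a vector with nonzero interior coordinate, a basis vector in V
  have hbasis : ∀ j : ℕ, (hj1 : 1 ≤ j) → (hj2 : j + 2 ≤ n) → ∀ u ∈ V,
      u ⟨j, by omega⟩ ≠ 0 → Pi.single (⟨j, by omega⟩ : Fin n) (1:ℂ) ∈ V := by
    intro j hj1 hj2 u hu hne
    have hmem : (u ⟨j, by omega⟩)⁻¹ • (fun l : Fin n => if l.val = j then u l else 0) ∈ V :=
      V.smul_mem _ (hsingle j hj1 hj2 u hu)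
    convert hmem using 1
    funext l
    simp only [Pi.smul_apply, smul_eq_mul, Pi.single_apply]
    rcases eq_or_ne l.val j with h' | h'
    · have hl : l = (⟨j, by omega⟩ : Fin n) := Fin.ext h'
      have hul : u l = u ⟨j, by omega⟩ := congrArg u hl
      rw [if_pos hl, if_pos h', hul]
      field_simp
    · rw [if_neg (fun hcon => h' (by rw [hcon])), if_neg h', mul_zero]
  -- moving basis vectors up and down
  have hup : ∀ k : ℕ, (hk : k + 1 < n) →
      Pi.single (⟨k, by omega⟩ : Fin n) (1:ℂ) ∈ V →
      Pi.single (⟨k+1, hk⟩ : Fin n) (1:ℂ) ∈ V := by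
    intro k hk hmem
    have h2 : c⁻¹ • (localBlock n k !![0, b; c, 0]).mulVec
        (Pi.single (⟨k, by omega⟩ : Fin n) (1:ℂ)) ∈ V := V.smul_mem _ (hAk k hk _ hmem)
    convert h2 using 1
    funext j
    simp only [Pi.smul_apply, smul_eq_mul, mulVec_A n k hk]
    have s1 : (Pi.single (⟨k, by omega⟩ : Fin n) (1:ℂ) : Fin n → ℂ) ⟨k, by omega⟩ = 1 := by
      simp
    have s2 : (Pi.single (⟨k, by omega⟩ : Fin n) (1:ℂ) : Fin n → ℂ) ⟨k+1, hk⟩ = 0 :=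
      Pi.single_eq_of_ne (by simp [Fin.ext_iff]) _
    rcases eq_or_ne j.val (k+1) with h1 | h1
    · have hj : j = ⟨k+1, hk⟩ := Fin.ext h1
      rw [Pi.single_apply, if_pos hj, if_neg (by omega), if_pos h1, s1]
      field_simp
    · rcases eq_or_ne j.val k with h0 | h0
      · rw [Pi.single_apply, if_neg (fun hcon => h1 (by rw [hcon])), if_pos h0, s2, mul_zero,
          mul_zero]
      · rw [Pi.single_apply, if_neg (fun hcon => h1 (by rw [hcon])), if_neg h0, if_neg h1,
          Pi.single_apply, if_neg (fun hcon => h0 (by rw [hcon])), mul_zero]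
  have hdown : ∀ k : ℕ, (hk : k + 1 < n) →
      Pi.single (⟨k+1, hk⟩ : Fin n) (1:ℂ) ∈ V →
      Pi.single (⟨k, by omega⟩ : Fin n) (1:ℂ) ∈ V := by
    intro k hk hmem
    have h2 : b⁻¹ • (localBlock n k !![0, b; c, 0]).mulVec
        (Pi.single (⟨k+1, hk⟩ : Fin n) (1:ℂ)) ∈ V := V.smul_mem _ (hAk k hk _ hmem)
    convert h2 using 1
    funext j
    simp only [Pi.smul_apply, smul_eq_mul, mulVec_A n k hk]
    have s1 : (Pi.single (⟨k+1, hk⟩ : Fin n) (1:ℂ) : Fin n → ℂ) ⟨k+1, hk⟩ = 1 := by simp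
    have s2 : (Pi.single (⟨k+1, hk⟩ : Fin n) (1:ℂ) : Fin n → ℂ) ⟨k, by omega⟩ = 0 :=
      Pi.single_eq_of_ne (by simp [Fin.ext_iff]) _
    rcases eq_or_ne j.val k with h0 | h0
    · have hj : j = ⟨k, by omega⟩ := Fin.ext h0
      rw [Pi.single_apply, if_pos hj, if_pos h0, s1]
      field_simp
    · rcases eq_or_ne j.val (k+1) with h1 | h1
      · rw [Pi.single_apply, if_neg (fun hcon => h0 (by rw [hcon])), if_neg h0, if_pos h1, s2,
          mul_zero, mul_zero]
      · rw [Pi.single_apply, if_neg (fun hcon => h0 (by rw [hcon])), if_neg h0, if_neg h1,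
          Pi.single_apply, if_neg (fun hcon => h1 (by rw [hcon])), mul_zero]
  -- find a basis vector in V at some interior coordinate
  obtain ⟨u, hu, hu0⟩ := (Submodule.ne_bot_iff V).mp hbot
  obtain ⟨m, hm⟩ : ∃ m : Fin n, u m ≠ 0 := by
    by_contra hcon
    push_neg at hcon
    exact hu0 (funext hcon)
  have hinterior : ∃ (j : ℕ) (hj1 : 1 ≤ j) (hj2 : j + 2 ≤ n),
      Pi.single (⟨j, by omega⟩ : Fin n) (1:ℂ) ∈ V := by
    rcases Nat.lt_or_ge m.val 1 with hm0 | hm1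
    · -- m.val = 0; apply A₁ to move it to coordinate 1
      have hv := hAk 0 (by omega) u hu
      refine ⟨1, le_refl 1, by omega, hbasis 1 (le_refl 1) (by omega) _ hv ?_⟩
      rw [mulVec_A n 0 (by omega)]
      have hum : u ⟨0, by omega⟩ = u m := congrArg u (by simp [Fin.ext_iff]; omega)
      rw [if_neg (by simp), if_pos (by simp), hum]
      exact mul_ne_zero hc hm
    · rcases Nat.lt_or_ge m.val (n-1) with hm2 | hm2
      · refine ⟨m.val, hm1, by omega, hbasis m.val hm1 (by omega) u hu ?_⟩
        have : u (⟨m.val, by omega⟩ : Fin n) = u m := congrArg u (by simp [Fin.ext_iff])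
        rw [this]; exact hm
      · -- m.val = n-1; apply A_{n-1} to move it to coordinate n-2
        have hv := hAk (n-2) (by omega) u hu
        refine ⟨n-2, by omega, by omega, hbasis (n-2) (by omega) (by omega) _ hv ?_⟩
        rw [mulVec_A n (n-2) (by omega)]
        have hum : u ⟨n-2+1, by omega⟩ = u m := congrArg u (by simp [Fin.ext_iff]; omega)
        rw [if_pos rfl, hum]
        exact mul_ne_zero hb hm
  obtain ⟨j0, hj01, hj02, hj0V⟩ := hinterior
  -- descend to coordinate 0
  have hdesc : ∀ d : ℕ, d ≤ j0 → Pi.single (⟨j0 - d, by omega⟩ : Fin n) (1:ℂ) ∈ V := by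
    intro d
    induction d with
    | zero => intro _; simpa using hj0V
    | succ d ih =>
      intro hd
      have hprev := ih (by omega)
      have hk : (j0 - (d+1)) + 1 < n := by omega
      have heq : (⟨j0 - d, by omega⟩ : Fin n) = ⟨(j0 - (d+1)) + 1, hk⟩ := by
        simp only [Fin.mk.injEq]; omega
      rw [heq] at hprev
      exact hdown (j0 - (d+1)) hk hprev
  have h0V : Pi.single (⟨0, by omega⟩ : Fin n) (1:ℂ) ∈ V := by
    have h := hdesc j0 (le_refl _)
    have heq : (⟨j0 - j0, by omega⟩ : Fin n) = ⟨0, by omega⟩ := by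
      simp only [Fin.mk.injEq]; omega
    rwa [heq] at h
  -- ascend to all coordinates
  have hall : ∀ t : ℕ, (ht : t < n) → Pi.single (⟨t, ht⟩ : Fin n) (1:ℂ) ∈ V := by
    intro t
    induction t with
    | zero => intro ht; exact h0V
    | succ t ih => intro ht; exact hup t ht (ih (by omega))
  -- conclude
  rw [eq_top_iff]
  intro w _
  have hw : w = ∑ m : Fin n, w m • (Pi.single m 1 : Fin n → ℂ) := by
    funext l
    rw [Finset.sum_apply]
    simp only [Pi.smul_apply, smul_eq_mul, Pi.single_apply]
    rw [Finset.sum_eq_single l]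
    · simp
    · intro i _ hi
      rw [if_neg (fun h => hi h.symm), mul_zero]
    · intro h; exact absurd (Finset.mem_univ l) h
  rw [hw]
  refine Submodule.sum_mem _ fun m _ => Submodule.smul_mem _ _ ?_
  have h := hall m.val m.isLt
  have heq : (⟨m.val, m.isLt⟩ : Fin n) = m := Fin.ext rfl
  rwa [heq] at h
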